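/- Let A₀ := [[2,0,−1,3],[0,0,−2,6],[−1,−2,1,2],[3,6,2,4]], B₀ := diag(2,−1,−2,0) and W₀ := [[0,−15,−24,10],[15,0,−36,−2],[24,36,0,53],[−10,2,−53,0]] (so A₀, B₀ ∈ S⁴ and W₀ ∈ K⁴). Then trace(A₀·W₀·B₀·W₀ᵀ) < −(19/2)·‖W₀‖_F², and for every nonzero symmetric matrix U ∈ S⁴ one has trace(A₀·U·B₀·U) > −(19/2)·‖U‖_F². Consequently, for every U ∈ S⁴ with ‖U‖_F = 1, ‖W₀‖_F⁻²·trace(A₀·W₀·B₀·W₀ᵀ) < trace(A₀·U·B₀·U). -/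

import Mathlib

open Matrix

noncomputable def frobNorm {n : ℕ} (M : Matrix (Fin n) (Fin n) ℝ) : ℝ :=
  Real.sqrt (Mᵀ * M).trace

def A₀ : Matrix (Fin 4) (Fin 4) ℝ :=
  !![2, 0, -1, 3; 0, 0, -2, 6; -1, -2, 1, 2; 3, 6, 2, 4]

def B₀ : Matrix (Fin 4) (Fin 4) ℝ :=
  !![2, 0, 0, 0; 0, -1, 0, 0; 0, 0, -2, 0; 0, 0, 0, 0]

def W₀ : Matrix (Fin 4) (Fin 4) ℝ :=
  !![0, -15, -24, 10; 15, 0, -36, -2; 24, 36, 0, 53; -10, 2, -53, 0]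

lemma frob_sq {n : ℕ} (M : Matrix (Fin n) (Fin n) ℝ) :
    (frobNorm M)^2 = ∑ p, ∑ q, (M q p)^2 := by
  have h : (Mᵀ * M).trace = ∑ p, ∑ q, (M q p)^2 := by
    simp [Matrix.trace, Matrix.diag, Matrix.mul_apply, sq]
  rw [frobNorm, Real.sq_sqrt (by rw [h]; positivity), h]

set_option maxHeartbeats 2000000 in
lemma sos_ineq (a b c d e f g h i j : ℝ) :
    (1/1000)*(a^2 + 2*b^2 + 2*c^2 + 2*d^2 + e^2 + 2*f^2 + 2*g^2 + h^2 + 2*i^2 + j^2) ≤ ((4 : ℝ)*a*a + (-4 : ℝ)*a*c + (12 : ℝ)*a*d + (-2 : ℝ)*b*b + (-8 : ℝ)*b*c + (24 : ℝ)*b*d + (2 : ℝ)*b*f + (-6 : ℝ)*b*g + (-2 : ℝ)*c*c + (8 : ℝ)*c*d + (4 : ℝ)*c*h + (-12 : ℝ)*c*i + (8 : ℝ)*d*d + (4 : ℝ)*e*f + (-12 : ℝ)*e*g + (-1 : ℝ)*f*f + (-4 : ℝ)*f*g + (8 : ℝ)*f*h + (-24 : ℝ)*f*i + (-4 : ℝ)*g*g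 + (-2 : ℝ)*h*h + (-8 : ℝ)*h*i + (-8 : ℝ)*i*i) + (19/2)*(a^2 + 2*b^2 + 2*c^2 + 2*d^2 + e^2 + 2*f^2 + 2*g^2 + h^2 + 2*i^2 + j^2) := by
  have hid : ((4 : ℝ)*a*a + (-4 : ℝ)*a*c + (12 : ℝ)*a*d + (-2 : ℝ)*b*b + (-8 : ℝ)*b*c + (24 : ℝ)*b*d + (2 : ℝ)*b*f + (-6 : ℝ)*b*g + (-2 : ℝ)*c*c + (8 : ℝ)*c*d + (4 : ℝ)*c*h + (-12 : ℝ)*c*i + (8 : ℝ)*d*d + (4 : ℝ)*e*f + (-12 : ℝ)*e*g + (-1 : ℝ)*f*f + (-4 : ℝ)*f*g + (8 : ℝ)*f*h + (-24 : ℝ)*f*i + (-4 : ℝ)*g*g + (-2 : ℝ)*h*h + (-8 : ℝ)*h*i + (-8 : ℝ)*i*i) + (19/2)*(a^2 + 2*b^2 + 2*c^2 + 2*d^2 + e^2 + 2*f^2 + 2*g^2 + h^2 + 2*i^2 + j^2) = (((13499 : ℝ)/1000)*(a + ((-2000 : ℝ)/13499)*c + ((6000 : ℝ)/13499)*d)^2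 + ((8499 : ℝ)/500)*(b + ((-2000 : ℝ)/8499)*c + ((2000 : ℝ)/2833)*d + ((500 : ℝ)/8499)*f + ((-500 : ℝ)/2833)*g)^2 + ((904079280499 : ℝ)/57364000500)*(c + ((442438002000 : ℝ)/904079280499)*d + ((13499000000 : ℝ)/904079280499)*f + ((-40497000000 : ℝ)/904079280499)*g + ((114728001000 : ℝ)/904079280499)*h + ((-344184003000 : ℝ)/904079280499)*i)^2 + ((5462924149456001 : ℝ)/452039640249500)*(d + ((-11973613000000 : ℝ)/176223359659871)*f + ((35920839000000 : ℝ)/176223359659871)*g + ((-442438002000000 : ℝ)/5462924149456001)*h + ((1327314006000000 : ℝ)/5462924149456001)*i)^2 + ((9499 : ℝ)/1000)*(e + ((2000 : ℝ)/9499)*f + ((-6000 : ℝ)/9499)*g)^2 + ((14612513854096662796371 : ℝ)/836972846704557314500)*(f + ((-319975370733235379000 : ℝ)/14612513854096662796371)*g + ((1089078867729743086000 : ℝ)/4870837951365554265457)*h + ((-3267236603189229258000 : ℝ)/4870837951365554265457)*i)^2 + ((74060099542532806068736129 : ℝ)/7306256927048331398185500)*(g + ((2736733151469583758000000 : ℝ)/74060099542532806068736129)*h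 + ((-8210199454408751274000000 : ℝ)/74060099542532806068736129)*i)^2 + ((14416340412187360101604009172501 : ℝ)/2295863085818516988130819999000)*(h + ((-782441738176971575356249996000 : ℝ)/14416340412187360101604009172501)*i)^2 + ((13825869023854203778669492582999 : ℝ)/7208170206093680050802004586250500)*(i)^2 + ((9499 : ℝ)/1000)*(j)^2) + (1/1000)*(a^2 + 2*b^2 + 2*c^2 + 2*d^2 + e^2 + 2*f^2 + 2*g^2 + h^2 + 2*i^2 + j^2) := by ring
  linarith [hid, sq_nonneg (a + ((-2000 : ℝ)/13499)*c + ((6000 : ℝ)/13499)*d), sq_nonneg (b + ((-2000 : ℝ)/8499)*c + ((2000 : ℝ)/2833)*d + ((500 : ℝ)/8499)*f + ((-500 : ℝ)/2833)*g), sq_nonneg (c + ((442438002000 : ℝ)/904079280499)*d + ((13499000000 : ℝ)/904079280499)*f + ((-40497000000 : ℝ)/904079280499)*g + ((114728001000 : ℝ)/904079280499)*h + ((-344184003000 : ℝ)/904079280499)*i), sq_nonneg (d + ((-11973613000000 : ℝ)/176223359659871)*f + ((35920839000000 : ℝ)/176223359659871)*g + ((-442438002000000 : ℝ)/5462924149456001)*h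 + ((1327314006000000 : ℝ)/5462924149456001)*i), sq_nonneg (e + ((2000 : ℝ)/9499)*f + ((-6000 : ℝ)/9499)*g), sq_nonneg (f + ((-319975370733235379000 : ℝ)/14612513854096662796371)*g + ((1089078867729743086000 : ℝ)/4870837951365554265457)*h + ((-3267236603189229258000 : ℝ)/4870837951365554265457)*i), sq_nonneg (g + ((2736733151469583758000000 : ℝ)/74060099542532806068736129)*h + ((-8210199454408751274000000 : ℝ)/74060099542532806068736129)*i), sq_nonneg (h + ((-782441738176971575356249996000 : ℝ)/14416340412187360101604009172501)*i), sq_nonneg (i), sq_nonneg (j)]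

theorem stmt_14 :
    (A₀ * W₀ * B₀ * W₀ᵀ).trace < -(19 / 2) * (frobNorm W₀) ^ 2 ∧
    (∀ U : Matrix (Fin 4) (Fin 4) ℝ, Uᵀ = U → U ≠ 0 →
      -(19 / 2) * (frobNorm U) ^ 2 < (A₀ * U * B₀ * U).trace) ∧
    (∀ U : Matrix (Fin 4) (Fin 4) ℝ, Uᵀ = U → frobNorm U = 1 →
      ((frobNorm W₀) ^ 2)⁻¹ * (A₀ * W₀ * B₀ * W₀ᵀ).trace < (A₀ * U * B₀ * U).trace) := by
  have hW2 : (frobNorm W₀)^2 = 10020 := by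
    rw [frob_sq]
    norm_num [W₀, Fin.sum_univ_four, Matrix.cons_val_two, Matrix.cons_val_three, Matrix.vecHead, Matrix.vecTail]
  have hWtr : (A₀ * W₀ * B₀ * W₀ᵀ).trace = -95230 := by
    simp only [A₀, B₀, W₀, Matrix.trace, Matrix.diag, Matrix.mul_apply, Fin.sum_univ_four,
      Matrix.transpose_apply]
    norm_num [Matrix.vecHead, Matrix.vecTail, Matrix.cons_val_two, Matrix.cons_val_three]
  have part1 : (A₀ * W₀ * B₀ * W₀ᵀ).trace < -(19 / 2) * (frobNorm W₀) ^ 2 := by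
    rw [hW2, hWtr]; norm_num
  have part2 : ∀ U : Matrix (Fin 4) (Fin 4) ℝ, Uᵀ = U → U ≠ 0 →
      -(19 / 2) * (frobNorm U) ^ 2 < (A₀ * U * B₀ * U).trace := by
    intro U hU hU0
    have hs : ∀ p q, U p q = U q p := by
      intro p q
      conv_lhs => rw [← hU]
      rfl
    have h10 : U 1 0 = U 0 1 := hs 1 0
    have h20 : U 2 0 = U 0 2 := hs 2 0
    have h30 : U 3 0 = U 0 3 := hs 3 0
    have h21 : U 2 1 = U 1 2 := hs 2 1
    have h31 : U 3 1 = U 1 3 := hs 3 1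
    have h32 : U 3 2 = U 2 3 := hs 3 2
    set a := U 0 0 with ha
    set b := U 0 1 with hb
    set c := U 0 2 with hc
    set d := U 0 3 with hd
    set e := U 1 1 with he
    set f := U 1 2 with hf
    set g := U 1 3 with hg
    set h := U 2 2 with hh
    set i := U 2 3 with hi
    set j := U 3 3 with hj
    have ht : (A₀ * U * B₀ * U).trace = (4 : ℝ)*a*a + (-4 : ℝ)*a*c + (12 : ℝ)*a*d + (-2 : ℝ)*b*b + (-8 : ℝ)*b*c + (24 : ℝ)*b*d + (2 : ℝ)*b*f + (-6 : ℝ)*b*g + (-2 : ℝ)*c*c + (8 : ℝ)*c*d + (4 : ℝ)*c*h + (-12 : ℝ)*c*i + (8 : ℝ)*d*d + (4 : ℝ)*e*f + (-12 : ℝ)*e*g + (-1 : ℝ)*f*f + (-4 : ℝ)*f*g + (8 : ℝ)*f*h + (-24 : ℝ)*f*i + (-4 : ℝ)*g*g + (-2 : ℝ)*h*h + (-8 : ℝ)*h*i + (-8 : ℝ)*i*i := by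
      simp only [A₀, B₀, Matrix.trace, Matrix.diag, Matrix.mul_apply, Fin.sum_univ_four]
      norm_num [Matrix.vecHead, Matrix.vecTail, Matrix.cons_val_two, Matrix.cons_val_three, h10, h20, h30, h21, h31, h32,
        ← ha, ← hb, ← hc, ← hd, ← he, ← hf, ← hg, ← hh, ← hi, ← hj]
      ring
    have hfr : (frobNorm U)^2 = a^2 + 2*b^2 + 2*c^2 + 2*d^2 + e^2 + 2*f^2 + 2*g^2 + h^2 + 2*i^2 + j^2 := by
      rw [frob_sq]
      simp only [Fin.sum_univ_four, h10, h20, h30, h21, h31, h32,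
        ← ha, ← hb, ← hc, ← hd, ← he, ← hf, ← hg, ← hh, ← hi, ← hj]
      ring
    have hpos : (0:ℝ) < a^2 + 2*b^2 + 2*c^2 + 2*d^2 + e^2 + 2*f^2 + 2*g^2 + h^2 + 2*i^2 + j^2 := by
      rw [← hfr, frob_sq]
      obtain ⟨p, q, hpq⟩ : ∃ p q, U p q ≠ 0 := by
        by_contra hcon
        push_neg at hcon
        exact hU0 (Matrix.ext fun p q => hcon p q)
      have h1 : (U p q)^2 ≤ ∑ p', ∑ q', (U q' p')^2 := by
        calc (U p q)^2 ≤ ∑ q', (U q' q)^2 :=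
              Finset.single_le_sum (f := fun q' => (U q' q)^2) (fun _ _ => sq_nonneg _) (Finset.mem_univ p)
          _ ≤ ∑ p', ∑ q', (U q' p')^2 :=
              Finset.single_le_sum (f := fun p' => ∑ q', (U q' p')^2) (fun _ _ => by positivity) (Finset.mem_univ q)
      have h2 : (0:ℝ) < (U p q)^2 := by positivity
      linarith
    have key := sos_ineq a b c d e f g h i j
    rw [ht, hfr]
    linarith
  refine ⟨part1, part2, ?_⟩
  intro U hU hfro
  have hne : U ≠ 0 := by
    intro h0
    rw [h0] at hfro
    simp [frobNorm] at hfro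
  have h2 := part2 U hU hne
  rw [hfro] at h2
  rw [hW2, hWtr]
  norm_num at h2 ⊢
  linarith
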